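/- Distribution of the ball counts in a set under the balls-into-bins mechanism: let m, s, k, n be positive integers with s ≤ m, p ∈ [0,1], and let S ⊆ [m] with |S| = s. Let W = (w₁,…,w_m) be the random occupancy vector of M^BIB(m,s,k,n,p) on input S. Then (i) the random variable ∑_{i∈S} w_i is distributed as 1 + X + X', where X ~ Binomial(k, s/m) and X' ~ Binomial(n, p·s/m) are independent; and (ii) for any other set S' ⊆ [m] with |S'| = s, the random variable ∑_{i∈S'} w_i is distributed as Z + X + X', where Z is a Bernoulli random variable with success probability |S ∩ S'|/s, X ~ Binomial(k, s/m), X' ~ Binomial(n, p·s/m), and Z, X, X' are independent. -/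

import Mathlib

open scoped ENNReal

noncomputable def uniformBin (m : ℕ) (hm : 0 < m) : PMF (Fin m) :=
  PMF.uniformOfFinset Finset.univ
    (Finset.univ_nonempty_iff.mpr (Fin.pos_iff_nonempty.mp hm))

/-- Sum of `n` independent copies of a random multiset. -/
noncomputable def repeatPMF {α : Type*} (ν : PMF (Multiset α)) : ℕ → PMF (Multiset α)
  | 0 => PMF.pure 0
  | n + 1 => ν.bind fun s => (repeatPMF ν n).map (s + ·)

/-- The Bernoulli `PMF` on `Bool` with an `ℝ≥0∞` parameter (the old `PMF.bernoulli`). -/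
noncomputable def bernoulliENNReal (p : ℝ≥0∞) (h : p ≤ 1) : PMF Bool :=
  PMF.ofFintype (fun b => cond b p (1 - p)) (by simp [h])

/-- With probability `p`, one draw from `ν`; otherwise nothing. -/
noncomputable def trialM {α : Type*} (ν : PMF α) (p : ℝ≥0∞) (hp : p ≤ 1) : PMF (Multiset α) :=
  (bernoulliENNReal p hp).bind fun b => if b then ν.map (fun x => {x}) else PMF.pure 0

/-- The balls-into-bins mechanism. -/
noncomputable def MBIB (m k n : ℕ) (hm : 0 < m) (p : ℝ≥0∞) (hp : p ≤ 1)
    (S : Finset (Fin m)) (hS : S.Nonempty) : PMF (Multiset (Fin m)) :=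
  (PMF.uniformOfFinset S hS).bind fun x =>
    (repeatPMF ((uniformBin m hm).map (fun y => {y})) k).bind fun A =>
      (repeatPMF (trialM (uniformBin m hm) p hp) n).map fun C => {x} + A + C

/-- A `{0,1}`-valued Bernoulli random variable with success probability `q`, as a `PMF ℕ`. -/
noncomputable def bernoulliNat (q : ℝ≥0∞) (h : q ≤ 1) : PMF ℕ :=
  (bernoulliENNReal q h).map (fun b => if b then 1 else 0)

/-- The `Binomial(N, q)` distribution, built as a sum of `N` independent Bernoulli's. -/
noncomputable def binomialNat (q : ℝ≥0∞) (h : q ≤ 1) : ℕ → PMF ℕ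
  | 0 => PMF.pure 0
  | N + 1 => (bernoulliNat q h).bind fun a => (binomialNat q h N).map (a + ·)

lemma bernoulliNat_apply (q : ℝ≥0∞) (h : q ≤ 1) (x : ℕ) :
    bernoulliNat q h x = if x = 1 then q else if x = 0 then 1 - q else 0 := by
  simp only [bernoulliNat, PMF.map_apply, tsum_bool]
  rcases x with _ | _ | x <;> simp [bernoulliENNReal, PMF.ofFintype_apply]

lemma bernoulliNat_one (h : (1:ℝ≥0∞) ≤ 1) : bernoulliNat 1 h = PMF.pure 1 := by
  ext x
  rw [bernoulliNat_apply, PMF.pure_apply]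
  by_cases hx1 : x = 1
  · simp [hx1]
  by_cases hx0 : x = 0 <;> simp [hx0, hx1, Ne.symm hx1]

lemma uniform_map_indicator {m : ℕ} (T U : Finset (Fin m)) (hU : U.Nonempty)
    (q : ℝ≥0∞) (h : q ≤ 1) (hq : q = ENNReal.ofReal (((T ∩ U).card : ℝ) / U.card)) :
    (PMF.uniformOfFinset U hU).map (fun y => if y ∈ T then 1 else 0) = bernoulliNat q h := by
  have hU0 : 0 < U.card := Finset.card_pos.mpr hU
  have hU0' : (0:ℝ) < U.card := by exact_mod_cast hU0
  have hcast : ∀ d : ℕ, (d : ℝ≥0∞) * (U.card : ℝ≥0∞)⁻¹ = ENNReal.ofReal ((d : ℝ) / U.card) := by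
    intro d
    rw [ENNReal.ofReal_div_of_pos hU0', ENNReal.ofReal_natCast, ENNReal.ofReal_natCast,
      div_eq_mul_inv]
  have hcle : (T ∩ U).card ≤ U.card := Finset.card_le_card Finset.inter_subset_right
  ext x
  rw [bernoulliNat_apply, PMF.map_apply, tsum_fintype]
  by_cases hx1 : x = 1
  · subst hx1
    have e : ∀ a : Fin m,
        (@ite _ ((1:ℕ) = (if a ∈ T then 1 else 0)) (Classical.propDecidable _)
            ((PMF.uniformOfFinset U hU) a) 0)
          = if a ∈ T ∩ U then (U.card : ℝ≥0∞)⁻¹ else 0 := by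
      intro a
      by_cases haT : a ∈ T <;> by_cases haU : a ∈ U <;>
        simp [haT, haU, PMF.uniformOfFinset_apply]
    simp only [e]
    rw [Finset.sum_ite_mem, Finset.univ_inter, Finset.sum_const, nsmul_eq_mul, hcast, hq]
    norm_num
  by_cases hx0 : x = 0
  · subst hx0
    have e : ∀ a : Fin m,
        (@ite _ ((0:ℕ) = (if a ∈ T then 1 else 0)) (Classical.propDecidable _)
            ((PMF.uniformOfFinset U hU) a) 0)
          = if a ∈ U \ T then (U.card : ℝ≥0∞)⁻¹ else 0 := by
      intro a
      by_cases haT : a ∈ T <;> by_cases haU : a ∈ U <;>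
        simp [haT, haU, PMF.uniformOfFinset_apply]
    simp only [e]
    rw [Finset.sum_ite_mem, Finset.univ_inter, Finset.sum_const, nsmul_eq_mul, hcast, hq]
    norm_num
    rw [show (1:ℝ≥0∞) = ENNReal.ofReal 1 from (ENNReal.ofReal_one).symm,
      ← ENNReal.ofReal_sub _ (by positivity)]
    congr 1
    have hd : ((U ∩ T).card : ℝ) + ((U \ T).card : ℝ) = (U.card : ℝ) := by
      exact_mod_cast congrArg (Nat.cast (R := ℝ)) (Finset.card_inter_add_card_sdiff U T)
    rw [Finset.inter_comm T U]
    field_simp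
    linarith
  · refine Eq.trans (Finset.sum_eq_zero fun a _ => ?_) (by simp [hx0, hx1])
    by_cases haT : a ∈ T <;> simp [haT, hx0, hx1]

lemma uniformBin_map_indicator {m : ℕ} (hm : 0 < m) (T : Finset (Fin m))
    (q : ℝ≥0∞) (h : q ≤ 1) (hq : q = ENNReal.ofReal ((T.card : ℝ) / m)) :
    (uniformBin m hm).map (fun y => if y ∈ T then 1 else 0) = bernoulliNat q h := by
  rw [uniformBin]
  refine uniform_map_indicator T Finset.univ _ q h ?_
  rw [hq]
  simp [Finset.inter_univ T]

lemma bernoulli_mix (a c : ℝ) (ha0 : 0 ≤ a) (ha1 : a ≤ 1) (hc0 : 0 ≤ c) (hc1 : c ≤ 1)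
    (hP : ENNReal.ofReal a ≤ 1) (hQ : ENNReal.ofReal c ≤ 1)
    (q : ℝ≥0∞) (h : q ≤ 1) (hq : q = ENNReal.ofReal (a * c)) :
    ((bernoulliENNReal _ hP).bind fun b =>
        if b then bernoulliNat _ hQ else PMF.pure 0) = bernoulliNat q h := by
  ext x
  rw [PMF.bind_apply, tsum_bool, bernoulliNat_apply]
  simp only [bernoulliENNReal, PMF.ofFintype_apply, Bool.cond_false, Bool.cond_true, if_true, if_false,
    Bool.false_eq_true, bernoulliNat_apply, PMF.pure_apply, hq]
  by_cases hx1 : x = 1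
  · subst hx1
    norm_num
    rw [← ENNReal.ofReal_mul ha0]
  by_cases hx0 : x = 0
  · subst hx0
    norm_num
    rw [show (1:ℝ≥0∞) = ENNReal.ofReal 1 from (ENNReal.ofReal_one).symm,
      ← ENNReal.ofReal_sub _ ha0, ← ENNReal.ofReal_sub _ hc0,
      ← ENNReal.ofReal_sub _ (mul_nonneg ha0 hc0), ← ENNReal.ofReal_mul ha0,
      ← ENNReal.ofReal_add (by linarith) (by nlinarith)]
    congr 1
    ring
  · simp [hx0, hx1]

lemma repeatM_map {α : Type*} (ν : PMF (Multiset α)) (f : Multiset α → ℕ)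
    (hf0 : f 0 = 0) (hfadd : ∀ A B, f (A + B) = f A + f B)
    (q : ℝ≥0∞) (h : q ≤ 1) (hν : ν.map f = bernoulliNat q h) :
    ∀ N, (repeatPMF ν N).map f = binomialNat q h N := by
  intro N
  induction N with
  | zero => simp [repeatPMF, binomialNat, PMF.pure_map, hf0]
  | succ N ih =>
    rw [repeatPMF, binomialNat, PMF.map_bind, ← hν, PMF.bind_map]
    refine congrArg _ (funext fun s => ?_)
    have hcomp : f ∘ (s + ·) = (f s + ·) ∘ f := funext fun t => hfadd s t
    show ((repeatPMF ν N).map (s + ·)).map f = (binomialNat q h N).map (f s + ·)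
    rw [PMF.map_comp, hcomp, ← PMF.map_comp, ih]

lemma MBIB_map {m : ℕ} (k n : ℕ) (hm : 0 < m) (P : ℝ≥0∞) (hp : P ≤ 1)
    (S : Finset (Fin m)) (hS : S.Nonempty) (f : Multiset (Fin m) → ℕ)
    (hfadd : ∀ A B, f (A + B) = f A + f B) :
    (MBIB m k n hm P hp S hS).map f
      = ((PMF.uniformOfFinset S hS).map (fun x => f {x})).bind fun z =>
          ((repeatPMF ((uniformBin m hm).map fun y => ({y} : Multiset (Fin m))) k).map f).bind
            fun a =>
              ((repeatPMF (trialM (uniformBin m hm) P hp) n).map f).map fun b => z + a + b := by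
  simp only [MBIB, PMF.map_bind, PMF.bind_map, PMF.map_comp, Function.comp_def, hfadd]

theorem stmt8 (m s k n : ℕ) (hm : 0 < m) (hs : 0 < s) (hk : 0 < k) (hn : 0 < n) (hsm : s ≤ m)
    (p : ℝ) (hp0 : 0 ≤ p) (hp1 : p ≤ 1)
    (S S' : Finset (Fin m)) (hScard : S.card = s) (hS'card : S'.card = s) :
    ((MBIB m k n hm (ENNReal.ofReal p) (ENNReal.ofReal_le_one.mpr hp1) S
        (Finset.card_pos.mp (hScard ▸ hs))).map (fun o => ∑ i ∈ S, o.count i) =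
      (binomialNat (ENNReal.ofReal ((s : ℝ) / m))
          (ENNReal.ofReal_le_one.mpr
            (div_le_one_of_le₀ (Nat.cast_le.mpr hsm) (Nat.cast_nonneg m))) k).bind fun a =>
        (binomialNat (ENNReal.ofReal (p * s / m))
            (ENNReal.ofReal_le_one.mpr
              (div_le_one_of_le₀
                (by nlinarith [(Nat.cast_le.mpr hsm : (s : ℝ) ≤ m), (Nat.cast_nonneg s : (0:ℝ) ≤ s)])
                (Nat.cast_nonneg m))) n).map fun b => 1 + a + b) ∧
    ((MBIB m k n hm (ENNReal.ofReal p) (ENNReal.ofReal_le_one.mpr hp1) S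
        (Finset.card_pos.mp (hScard ▸ hs))).map (fun o => ∑ i ∈ S', o.count i) =
      (bernoulliNat (ENNReal.ofReal (((S ∩ S').card : ℝ) / s))
          (ENNReal.ofReal_le_one.mpr
            (div_le_one_of_le₀
              (Nat.cast_le.mpr (hScard ▸ Finset.card_le_card Finset.inter_subset_left))
              (Nat.cast_nonneg s)))).bind fun z =>
        (binomialNat (ENNReal.ofReal ((s : ℝ) / m))
            (ENNReal.ofReal_le_one.mpr
              (div_le_one_of_le₀ (Nat.cast_le.mpr hsm) (Nat.cast_nonneg m))) k).bind fun a =>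
          (binomialNat (ENNReal.ofReal (p * s / m))
              (ENNReal.ofReal_le_one.mpr
                (div_le_one_of_le₀
                  (by nlinarith [(Nat.cast_le.mpr hsm : (s : ℝ) ≤ m), (Nat.cast_nonneg s : (0:ℝ) ≤ s)])
                  (Nat.cast_nonneg m))) n).map fun b => z + a + b) := by
  have hSne : S.Nonempty := Finset.card_pos.mp (hScard ▸ hs)
  have hm' : (0:ℝ) < m := by exact_mod_cast hm
  have hs' : (0:ℝ) < s := by exact_mod_cast hs
  have hP : ENNReal.ofReal p ≤ 1 := ENNReal.ofReal_le_one.mpr hp1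
  have hadd : ∀ (T : Finset (Fin m)) (A B : Multiset (Fin m)),
      (∑ i ∈ T, (A + B).count i) = (∑ i ∈ T, A.count i) + ∑ i ∈ T, B.count i := by
    intro T A B
    simp [Multiset.count_add, Finset.sum_add_distrib]
  have hf0 : ∀ (T : Finset (Fin m)), (∑ i ∈ T, (0 : Multiset (Fin m)).count i) = 0 := by
    intro T; simp
  have hsingle : ∀ (T : Finset (Fin m)) (x : Fin m),
      (∑ i ∈ T, ({x} : Multiset (Fin m)).count i) = if x ∈ T then 1 else 0 := by
    intro T x
    simp [Multiset.count_singleton, Finset.sum_ite_eq']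
  have main : ∀ (T : Finset (Fin m)), T.card = s → ∀ (qz : ℝ≥0∞) (hz : qz ≤ 1),
      qz = ENNReal.ofReal (((T ∩ S).card : ℝ) / s) →
      ∀ (qk : ℝ≥0∞) (hk' : qk ≤ 1), qk = ENNReal.ofReal ((s : ℝ) / m) →
      ∀ (qn : ℝ≥0∞) (hn' : qn ≤ 1), qn = ENNReal.ofReal (p * s / m) →
      (MBIB m k n hm (ENNReal.ofReal p) hP S hSne).map (fun o => ∑ i ∈ T, o.count i)
        = (bernoulliNat qz hz).bind fun z => (binomialNat qk hk' k).bind fun a =>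
            (binomialNat qn hn' n).map fun b => z + a + b := by
    intro T hT qz hz hqz qk hk' hqk qn hn' hqn
    have hTm : (T.card : ℝ) / m = (s : ℝ) / m := by rw [hT]
    rw [MBIB_map k n hm _ hP S hSne _ (hadd T)]
    have e1 : ((PMF.uniformOfFinset S hSne).map
          fun x => ∑ i ∈ T, ({x} : Multiset (Fin m)).count i) = bernoulliNat qz hz := by
      rw [show (fun x : Fin m => ∑ i ∈ T, ({x} : Multiset (Fin m)).count i)
            = fun x => if x ∈ T then 1 else 0 from funext (hsingle T)]
      refine uniform_map_indicator T S hSne qz hz ?_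
      rw [hqz, hScard]
    have ebk : ((uniformBin m hm).map (fun y => ({y} : Multiset (Fin m)))).map
          (fun o => ∑ i ∈ T, o.count i) = bernoulliNat qk hk' := by
      rw [PMF.map_comp]
      rw [show ((fun o : Multiset (Fin m) => ∑ i ∈ T, o.count i) ∘
            fun y => ({y} : Multiset (Fin m))) = fun x => if x ∈ T then 1 else 0
          from funext fun x => hsingle T x]
      refine uniformBin_map_indicator hm T qk hk' ?_
      rw [hqk, hTm]
    have e2 : (repeatPMF ((uniformBin m hm).map fun y => ({y} : Multiset (Fin m))) k).map
          (fun o => ∑ i ∈ T, o.count i) = binomialNat qk hk' k :=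
      repeatM_map _ _ (hf0 T) (hadd T) qk hk' ebk k
    have ebn : (trialM (uniformBin m hm) (ENNReal.ofReal p) hP).map
          (fun o => ∑ i ∈ T, o.count i) = bernoulliNat qn hn' := by
      rw [trialM, PMF.map_bind]
      have hQ : ENNReal.ofReal ((s : ℝ) / m) ≤ 1 :=
        ENNReal.ofReal_le_one.mpr (div_le_one_of_le₀ (Nat.cast_le.mpr hsm) (Nat.cast_nonneg m))
      have step : (fun b : Bool =>
            ((if b then (uniformBin m hm).map (fun x => ({x} : Multiset (Fin m)))
                else PMF.pure 0).map (fun o => ∑ i ∈ T, o.count i)))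
          = fun b => if b then bernoulliNat _ hQ else PMF.pure 0 := by
        funext b
        cases b
        · simp only [if_false, Bool.false_eq_true, PMF.pure_map, hf0 T]
        · simp only [if_true]
          rw [PMF.map_comp]
          rw [show ((fun o : Multiset (Fin m) => ∑ i ∈ T, o.count i) ∘
                fun y => ({y} : Multiset (Fin m))) = fun x => if x ∈ T then 1 else 0
              from funext fun x => hsingle T x]
          exact uniformBin_map_indicator hm T _ hQ (by rw [hTm])
      rw [step]
      refine bernoulli_mix p ((s : ℝ) / m) hp0 hp1 (by positivity)
        (div_le_one_of_le₀ (Nat.cast_le.mpr hsm) (Nat.cast_nonneg m)) hP hQ qn hn' ?_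
      rw [hqn, mul_div_assoc]
    have e3 : (repeatPMF (trialM (uniformBin m hm) (ENNReal.ofReal p) hP) n).map
          (fun o => ∑ i ∈ T, o.count i) = binomialNat qn hn' n :=
      repeatM_map _ _ (hf0 T) (hadd T) qn hn' ebn n
    rw [e1, e2, e3]
  constructor
  · have hqz : (1 : ℝ≥0∞) = ENNReal.ofReal (((S ∩ S).card : ℝ) / s) := by
      rw [Finset.inter_self, hScard, div_self (ne_of_gt hs'), ENNReal.ofReal_one]
    have h1 := main S hScard 1 le_rfl hqz _
      (ENNReal.ofReal_le_one.mpr (div_le_one_of_le₀ (Nat.cast_le.mpr hsm) (Nat.cast_nonneg m))) rfl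
      _ (ENNReal.ofReal_le_one.mpr (div_le_one_of_le₀
        (by nlinarith [(Nat.cast_le.mpr hsm : (s : ℝ) ≤ m), (Nat.cast_nonneg s : (0:ℝ) ≤ s)])
        (Nat.cast_nonneg m))) rfl
    refine h1.trans ?_
    rw [bernoulliNat_one, PMF.pure_bind]
  · have hz : ENNReal.ofReal (((S ∩ S').card : ℝ) / s) ≤ 1 :=
      ENNReal.ofReal_le_one.mpr
        (div_le_one_of_le₀
          (Nat.cast_le.mpr (hScard ▸ Finset.card_le_card Finset.inter_subset_left))
          (Nat.cast_nonneg s))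
    have hqz : ENNReal.ofReal (((S ∩ S').card : ℝ) / s)
        = ENNReal.ofReal (((S' ∩ S).card : ℝ) / s) := by rw [Finset.inter_comm]
    exact main S' hS'card _ hz hqz _
      (ENNReal.ofReal_le_one.mpr (div_le_one_of_le₀ (Nat.cast_le.mpr hsm) (Nat.cast_nonneg m))) rfl
      _ (ENNReal.ofReal_le_one.mpr (div_le_one_of_le₀
        (by nlinarith [(Nat.cast_le.mpr hsm : (s : ℝ) ≤ m), (Nat.cast_nonneg s : (0:ℝ) ≤ s)])
        (Nat.cast_nonneg m))) rfl
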